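/- Let n ≥ 1, A ∈ ℂ^{n×n}, and r ∈ ℝ. Then the v-projected Davis–Wielandt shell W_{≥r}(A) := { ⟨x, A x⟩ : x ∈ ℂⁿ, ‖x‖ = 1, ‖A x‖ ≥ r } is a compact and convex subset of ℂ. -/

import Mathlib

open scoped ComplexOrder Matrix

noncomputable section

/-- The vertically projected Davis–Wielandt shell `W_{≥r}(A)`. -/
def wShell {n : ℕ} (A : Matrix (Fin n) (Fin n) ℂ) (r : ℝ) : Set ℂ :=
  { z | ∃ x : EuclideanSpace ℂ (Fin n), ‖x‖ = 1 ∧ r ≤ ‖Matrix.toEuclideanLin A x‖ ∧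
      z = (inner ℂ x (Matrix.toEuclideanLin A x) : ℂ) }

namespace WShellAux

open Complex

local notation "conj'" => starRingEnd ℂ

lemma kernel3 (c1 c2 c3 : ℂ) :
    ∃ v1 v2 v3 : ℝ, ¬(v1 = 0 ∧ v2 = 0 ∧ v3 = 0) ∧
      (v1 : ℂ) * c1 + (v2 : ℂ) * c2 + (v3 : ℂ) * c3 = 0 := by
  let f : (Fin 3 → ℝ) →ₗ[ℝ] ℂ :=
    { toFun := fun v => (v 0 : ℂ) * c1 + (v 1 : ℂ) * c2 + (v 2 : ℂ) * c3
      map_add' := by intro u v; simp; ring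
      map_smul' := by intro a v; simp; ring }
  have hni : ¬ Function.Injective f := by
    intro h
    have h1 := LinearMap.finrank_le_finrank_of_injective h
    rw [Module.finrank_fin_fun, Complex.finrank_real_complex] at h1
    omega
  rw [Function.not_injective_iff] at hni
  obtain ⟨u, w, huw, hne⟩ := hni
  refine ⟨u 0 - w 0, u 1 - w 1, u 2 - w 2, ?_, ?_⟩
  · rintro ⟨h0, h1, h2⟩
    apply hne
    funext i
    fin_cases i <;> simp <;> linarith
  · have : f u - f w = 0 := by rw [huw, sub_self]
    simp only [f, LinearMap.coe_mk, AddHom.coe_mk] at this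
    push_cast
    linear_combination this

lemma core3 (c1 c2 c3 : ℂ) (d1 d2 d3 m1 m2 m3 : ℝ)
    (hm : m1 ^ 2 + m2 ^ 2 + m3 ^ 2 ≤ 1) :
    ∃ n1 n2 n3 : ℝ, n1 ^ 2 + n2 ^ 2 + n3 ^ 2 = 1 ∧
      (n1 : ℂ) * c1 + (n2 : ℂ) * c2 + (n3 : ℂ) * c3
        = (m1 : ℂ) * c1 + (m2 : ℂ) * c2 + (m3 : ℂ) * c3 ∧
      m1 * d1 + m2 * d2 + m3 * d3 ≤ n1 * d1 + n2 * d2 + n3 * d3 := by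
  obtain ⟨v1, v2, v3, hv0, hvker⟩ := kernel3 c1 c2 c3
  obtain ⟨w1, w2, w3, hw0, hwker, hslope⟩ :
      ∃ w1 w2 w3 : ℝ, ¬(w1 = 0 ∧ w2 = 0 ∧ w3 = 0) ∧
        (w1 : ℂ) * c1 + (w2 : ℂ) * c2 + (w3 : ℂ) * c3 = 0 ∧
        0 ≤ w1 * d1 + w2 * d2 + w3 * d3 := by
    rcases le_or_gt 0 (v1 * d1 + v2 * d2 + v3 * d3) with h | h
    · exact ⟨v1, v2, v3, hv0, hvker, h⟩
    · refine ⟨-v1, -v2, -v3, ?_, by push_cast; linear_combination -hvker, by linarith⟩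
      rintro ⟨h1, h2, h3⟩
      exact hv0 ⟨by linarith, by linarith, by linarith⟩
  set W := w1 ^ 2 + w2 ^ 2 + w3 ^ 2 with hW
  have hWpos : 0 < W := by
    by_contra hc
    push_neg at hc
    have e1 : w1 ^ 2 = 0 := le_antisymm (by nlinarith [sq_nonneg w2, sq_nonneg w3]) (sq_nonneg _)
    have e2 : w2 ^ 2 = 0 := le_antisymm (by nlinarith [sq_nonneg w1, sq_nonneg w3]) (sq_nonneg _)
    have e3 : w3 ^ 2 = 0 := le_antisymm (by nlinarith [sq_nonneg w1, sq_nonneg w2]) (sq_nonneg _)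
    exact hw0 ⟨pow_eq_zero_iff two_ne_zero |>.mp e1, pow_eq_zero_iff two_ne_zero |>.mp e2,
      pow_eq_zero_iff two_ne_zero |>.mp e3⟩
  set S := |m1 * w1 + m2 * w2 + m3 * w3| with hS
  have hS0 : 0 ≤ S := abs_nonneg _
  have hSd : m1 * w1 + m2 * w2 + m3 * w3 ≤ S := le_abs_self _
  have hSd' : -S ≤ m1 * w1 + m2 * w2 + m3 * w3 := neg_abs_le _
  set τ := (2 * S + W + 1) / W with hτ
  have hτpos : 0 < τ := by positivity
  set g : ℝ → ℝ := fun t => (m1 + t * w1) ^ 2 + (m2 + t * w2) ^ 2 + (m3 + t * w3) ^ 2 with hg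
  have hτW : τ * W = 2 * S + W + 1 := by rw [hτ]; field_simp
  have hg1 : 1 ≤ g τ := by
    have expand : g τ = (m1 ^ 2 + m2 ^ 2 + m3 ^ 2)
        + 2 * τ * (m1 * w1 + m2 * w2 + m3 * w3) + τ ^ 2 * W := by
      simp only [hg]; ring
    nlinarith [sq_nonneg (m1 ^ 2 + m2 ^ 2 + m3 ^ 2), sq_nonneg (W - 1),
      mul_le_mul_of_nonneg_left hSd' (le_of_lt hτpos),
      mul_pos hτpos hWpos, sq_nonneg τ,
      mul_nonneg (mul_nonneg (le_of_lt hτpos) hS0) (le_of_lt hWpos)]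
  have hgc : Continuous g := by fun_prop
  have hmem : (1:ℝ) ∈ Set.Icc (g 0) (g τ) := by
    constructor
    · have hg0 : g 0 = m1 ^ 2 + m2 ^ 2 + m3 ^ 2 := by simp only [hg]; norm_num
      rw [hg0]; exact hm
    · exact hg1
  obtain ⟨t, ht, hgt⟩ := intermediate_value_Icc (le_of_lt hτpos) hgc.continuousOn hmem
  refine ⟨m1 + t * w1, m2 + t * w2, m3 + t * w3, by simp only [hg] at hgt; exact hgt, ?_, ?_⟩
  · push_cast
    linear_combination (t : ℂ) * hwker
  · have ht0 : 0 ≤ t := ht.1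
    nlinarith [mul_nonneg ht0 hslope]

/-- Expansion of a sesquilinear form value in terms of Bloch coordinates. -/
lemma blochAlg (α β q11 q12 q21 q22 : ℂ) (h : Complex.normSq α + Complex.normSq β = 1) :
    conj' α * α * q11 + conj' α * β * q12 + conj' β * α * q21 + conj' β * β * q22 =
      (q11 + q22) / 2 + ((2 * (conj' α * β).re : ℝ) : ℂ) * ((q12 + q21) / 2)
        + ((2 * (conj' α * β).im : ℝ) : ℂ) * (Complex.I * (q12 - q21) / 2)
        + ((Complex.normSq α - Complex.normSq β : ℝ) : ℂ) * ((q11 - q22) / 2) := by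
  have ha : (Complex.normSq α : ℂ) = conj' α * α := by
    rw [mul_comm]; exact (Complex.mul_conj α).symm
  have hb : (Complex.normSq β : ℂ) = conj' β * β := by
    rw [mul_comm]; exact (Complex.mul_conj β).symm
  have hcAB : conj' α * α + conj' β * β = 1 := by
    rw [← ha, ← hb]; exact_mod_cast h
  set u : ℂ := conj' α * β with hu
  have h1 : ((2 * u.re : ℝ) : ℂ) = u + conj' u := by
    push_cast; rw [Complex.add_conj]; push_cast; ring
  have h2 : ((2 * u.im : ℝ) : ℂ) * Complex.I = u - conj' u := by
    push_cast; rw [Complex.sub_conj]; push_cast; ring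
  have h3 : conj' u = conj' β * α := by
    rw [hu, map_mul, Complex.conj_conj]; ring
  push_cast [←hu] at h1 h2 ⊢
  linear_combination (-(q21 : ℂ)) * h3 - (q12 + q21)/2 * h1 - (q12 - q21)/2 * h2
    - (q11 - q22)/2 * ha + (q11 - q22)/2 * hb + (q11 + q22)/2 * hcAB

lemma blochSurj (n1 n2 n3 : ℝ) (h : n1^2 + n2^2 + n3^2 = 1) :
    ∃ α β : ℂ, Complex.normSq α + Complex.normSq β = 1 ∧
      2 * (conj' α * β).re = n1 ∧ 2 * (conj' α * β).im = n2 ∧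
      Complex.normSq α - Complex.normSq β = n3 := by
  by_cases h3 : n3 = -1
  · refine ⟨0, 1, by simp, ?_, ?_, by simp [h3]⟩ <;>
    · subst h3
      have h1 : n1 = 0 := by nlinarith
      have h2 : n2 = 0 := by nlinarith
      simp [h1, h2]
  · have hn3 : -1 ≤ n3 := by nlinarith
    have hpos : 0 < (1 + n3) / 2 := by
      rcases lt_or_eq_of_le hn3 with h' | h'
      · linarith
      · exact absurd h'.symm h3
    set a := Real.sqrt ((1 + n3) / 2) with ha
    have ha2 : a ^ 2 = (1 + n3) / 2 := Real.sq_sqrt (le_of_lt hpos)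
    have hapos : 0 < a := Real.sqrt_pos.mpr hpos
    refine ⟨(a : ℂ), (n1 / (2 * a) : ℝ) + (n2 / (2 * a) : ℝ) * Complex.I, ?_, ?_, ?_, ?_⟩
    · rw [Complex.normSq_ofReal, Complex.normSq_add_mul_I]
      field_simp
      nlinarith
    · rw [Complex.conj_ofReal]
      simp only [Complex.add_re, Complex.mul_re, Complex.ofReal_re, Complex.ofReal_im,
        Complex.I_re, Complex.I_im, Complex.add_im, Complex.mul_im]
      field_simp
      ring
    · rw [Complex.conj_ofReal]
      simp only [Complex.add_re, Complex.mul_re, Complex.ofReal_re, Complex.ofReal_im,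
        Complex.I_re, Complex.I_im, Complex.add_im, Complex.mul_im]
      field_simp
      ring
    · rw [Complex.normSq_ofReal, Complex.normSq_add_mul_I]
      field_simp
      nlinarith

lemma sph_le_one (p q c : ℝ) (h : p ^ 2 + q ^ 2 + c ^ 2 = 1) : c ≤ 1 := by
  nlinarith [sq_nonneg p, sq_nonneg q, sq_nonneg (c - 1), sq_nonneg (c + 1)]

lemma ball_combo (a b p q c : ℝ) (ha : 0 ≤ a) (hb : 0 ≤ b) (hab : a + b = 1)
    (h : p ^ 2 + q ^ 2 + c ^ 2 = 1) :
    (b * p) ^ 2 + (b * q) ^ 2 + (a + b * c) ^ 2 ≤ 1 := by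
  have hc1 : c ≤ 1 := sph_le_one p q c h
  nlinarith [mul_nonneg (mul_nonneg ha hb) (by linarith : (0:ℝ) ≤ 1 - c), sq_nonneg b,
    mul_nonneg ha hb]

lemma norm_lower (r X Y Z a b : ℝ) (ha : 0 ≤ a) (hb : 0 ≤ b) (hab : a + b = 1)
    (hX : r ≤ X) (hY : r ≤ Y) (hZn : 0 ≤ Z) (hcomb : a * X ^ 2 + b * Y ^ 2 ≤ Z ^ 2) :
    r ≤ Z := by
  rcases le_or_gt r 0 with hr | hr
  · linarith
  · have hX2 : r ^ 2 ≤ X ^ 2 := by nlinarith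
    have hY2 : r ^ 2 ≤ Y ^ 2 := by nlinarith
    have h1 : a * r ^ 2 ≤ a * X ^ 2 := mul_le_mul_of_nonneg_left hX2 ha
    have h2 : b * r ^ 2 ≤ b * Y ^ 2 := mul_le_mul_of_nonneg_left hY2 hb
    have hr2 : r ^ 2 ≤ Z ^ 2 := by nlinarith
    by_contra hc
    push_neg at hc
    nlinarith

variable {n : ℕ}

local notation "E" => EuclideanSpace ℂ (Fin n)

lemma normSq_eq_re_inner (w : E) : ‖w‖ ^ 2 = (inner ℂ w w : ℂ).re := by
  rw [inner_self_eq_norm_sq_to_K]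
  norm_cast

lemma comboQ (T : E →ₗ[ℂ] E) (e1 e2 : E) (α β : ℂ)
    (h : Complex.normSq α + Complex.normSq β = 1) :
    (inner ℂ (α • e1 + β • e2) (T (α • e1 + β • e2)) : ℂ) =
      ((inner ℂ e1 (T e1) : ℂ) + (inner ℂ e2 (T e2) : ℂ)) / 2
      + ((2 * (conj' α * β).re : ℝ) : ℂ) * (((inner ℂ e1 (T e2) : ℂ) + (inner ℂ e2 (T e1) : ℂ)) / 2)
      + ((2 * (conj' α * β).im : ℝ) : ℂ)
          * (Complex.I * ((inner ℂ e1 (T e2) : ℂ) - (inner ℂ e2 (T e1) : ℂ)) / 2)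
      + ((Complex.normSq α - Complex.normSq β : ℝ) : ℂ)
          * (((inner ℂ e1 (T e1) : ℂ) - (inner ℂ e2 (T e2) : ℂ)) / 2) := by
  have exp : (inner ℂ (α • e1 + β • e2) (T (α • e1 + β • e2)) : ℂ) =
      conj' α * α * (inner ℂ e1 (T e1) : ℂ) + conj' α * β * (inner ℂ e1 (T e2) : ℂ)
        + conj' β * α * (inner ℂ e2 (T e1) : ℂ) + conj' β * β * (inner ℂ e2 (T e2) : ℂ) := by
    simp only [map_add, map_smul, inner_add_left, inner_add_right, inner_smul_left,
      inner_smul_right]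
    ring
  rw [exp]
  exact blochAlg α β _ _ _ _ h

lemma comboP (T : E →ₗ[ℂ] E) (e1 e2 : E) (α β : ℂ)
    (h : Complex.normSq α + Complex.normSq β = 1) :
    ‖T (α • e1 + β • e2)‖ ^ 2 =
      (((inner ℂ (T e1) (T e1) : ℂ) + (inner ℂ (T e2) (T e2) : ℂ)) / 2).re
      + (2 * (conj' α * β).re)
          * ((((inner ℂ (T e1) (T e2) : ℂ) + (inner ℂ (T e2) (T e1) : ℂ)) / 2).re)
      + (2 * (conj' α * β).im)
          * ((Complex.I * ((inner ℂ (T e1) (T e2) : ℂ) - (inner ℂ (T e2) (T e1) : ℂ)) / 2).re)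
      + (Complex.normSq α - Complex.normSq β)
          * ((((inner ℂ (T e1) (T e1) : ℂ) - (inner ℂ (T e2) (T e2) : ℂ)) / 2).re) := by
  have exp : (inner ℂ (T (α • e1 + β • e2)) (T (α • e1 + β • e2)) : ℂ) =
      conj' α * α * (inner ℂ (T e1) (T e1) : ℂ) + conj' α * β * (inner ℂ (T e1) (T e2) : ℂ)
        + conj' β * α * (inner ℂ (T e2) (T e1) : ℂ)
        + conj' β * β * (inner ℂ (T e2) (T e2) : ℂ) := by
    simp only [map_add, map_smul, inner_add_left, inner_add_right, inner_smul_left,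
      inner_smul_right]
    ring
  rw [normSq_eq_re_inner, exp, blochAlg α β _ _ _ _ h]
  simp [Complex.add_re, Complex.re_ofReal_mul]

lemma comboNorm (e1 e2 : E) (he1 : ‖e1‖ = 1) (he2 : ‖e2‖ = 1)
    (h12 : (inner ℂ e1 e2 : ℂ) = 0) (α β : ℂ)
    (h : Complex.normSq α + Complex.normSq β = 1) :
    ‖α • e1 + β • e2‖ = 1 := by
  have h21 : (inner ℂ e2 e1 : ℂ) = 0 := by rw [← inner_conj_symm, h12, map_zero]
  have he1' : (inner ℂ e1 e1 : ℂ) = 1 := by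
    rw [inner_self_eq_norm_sq_to_K, he1]; norm_num
  have he2' : (inner ℂ e2 e2 : ℂ) = 1 := by
    rw [inner_self_eq_norm_sq_to_K, he2]; norm_num
  have exp : (inner ℂ (α • e1 + β • e2) (α • e1 + β • e2) : ℂ) =
      conj' α * α * (inner ℂ e1 e1 : ℂ) + conj' α * β * (inner ℂ e1 e2 : ℂ)
        + conj' β * α * (inner ℂ e2 e1 : ℂ) + conj' β * β * (inner ℂ e2 e2 : ℂ) := by
    simp only [inner_add_left, inner_add_right, inner_smul_left, inner_smul_right]
    ring
  have hz : (inner ℂ (α • e1 + β • e2) (α • e1 + β • e2) : ℂ) = 1 := by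
    rw [exp, he1', he2', h12, h21]
    have ha : conj' α * α = (Complex.normSq α : ℂ) := by rw [mul_comm]; exact Complex.mul_conj α
    have hb : conj' β * β = (Complex.normSq β : ℂ) := by rw [mul_comm]; exact Complex.mul_conj β
    rw [mul_zero, mul_zero, mul_one, mul_one, add_zero, add_zero, ha, hb]
    exact_mod_cast h
  have hn2 : ‖α • e1 + β • e2‖ ^ 2 = 1 := by
    rw [normSq_eq_re_inner, hz]; norm_num
  calc ‖α • e1 + β • e2‖ = Real.sqrt (‖α • e1 + β • e2‖ ^ 2) :=
        (Real.sqrt_sq (norm_nonneg _)).symm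
    _ = 1 := by rw [hn2, Real.sqrt_one]

end WShellAux

/-- Paper's Proposition 1: the v-projected DW-shell is compact and convex. -/
theorem wShell_isCompact_convex {n : ℕ} (hn : 1 ≤ n)
    (A : Matrix (Fin n) (Fin n) ℂ) (r : ℝ) :
    IsCompact (wShell A r) ∧ Convex ℝ (wShell A r) := by
  open WShellAux in
  set T : EuclideanSpace ℂ (Fin n) →ₗ[ℂ] EuclideanSpace ℂ (Fin n) := Matrix.toEuclideanLin A
    with hT
  have hTc : Continuous T := T.continuous_of_finiteDimensional
  constructor
  · -- compactness
    have himg : wShell A r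
        = (fun x : EuclideanSpace ℂ (Fin n) => (inner ℂ x (T x) : ℂ)) ''
          {x | ‖x‖ = 1 ∧ r ≤ ‖T x‖} := by
      ext w
      constructor
      · rintro ⟨x, h1, h2, h3⟩; exact ⟨x, ⟨h1, h2⟩, h3.symm⟩
      · rintro ⟨x, ⟨h1, h2⟩, h3⟩; exact ⟨x, h1, h2, h3.symm⟩
    rw [himg]
    apply IsCompact.image _ (continuous_id.inner hTc)
    apply Metric.isCompact_of_isClosed_isBounded
    · exact (isClosed_eq continuous_norm continuous_const).inter
        (isClosed_le continuous_const hTc.norm)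
    · apply (Metric.isBounded_closedBall (x := (0 : EuclideanSpace ℂ (Fin n))) (r := 1)).subset
      intro x hx
      rw [Metric.mem_closedBall, dist_zero_right]
      exact le_of_eq hx.1
  · -- convexity
    intro u hu v hv a b ha hb hab
    obtain ⟨x, hx1, hxr, hux⟩ := hu
    obtain ⟨y, hy1, hyr, hvy⟩ := hv
    rw [← hT] at hxr hyr hux hvy
    have hxx : (inner ℂ x x : ℂ) = 1 := by
      rw [inner_self_eq_norm_sq_to_K, hx1]; norm_num
    have habC : (a : ℂ) + (b : ℂ) = 1 := by exact_mod_cast congrArg (Complex.ofReal) hab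
    by_cases hcase : y - (inner ℂ x y : ℂ) • x = 0
    · -- y parallel to x
      have hxy : y = (inner ℂ x y : ℂ) • x := by rwa [sub_eq_zero] at hcase
      set l : ℂ := (inner ℂ x y : ℂ) with hl
      have hln : ‖l‖ = 1 := by
        have h' := congrArg norm hxy
        rw [norm_smul, hx1, mul_one, hy1] at h'
        exact h'.symm
      have hll : starRingEnd ℂ l * l = 1 := by
        rw [mul_comm, Complex.mul_conj]
        rw [Complex.normSq_eq_norm_sq, hln]
        norm_num
      have hvu : v = u := by
        rw [hvy, hux, hxy, map_smul, inner_smul_left, inner_smul_right, ← mul_assoc, hll,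
          one_mul]
      refine ⟨x, hx1, ?_, ?_⟩
      · rw [← hT]; exact hxr
      · rw [← hT]
        rw [hvu, Complex.real_smul, Complex.real_smul, ← add_mul, habC, one_mul]
        exact hux
    · -- x, y independent
      set y' : EuclideanSpace ℂ (Fin n) := y - (inner ℂ x y : ℂ) • x with hy'
      have hy'0 : ‖y'‖ ≠ 0 := norm_ne_zero_iff.mpr hcase
      set e2 : EuclideanSpace ℂ (Fin n) := ((‖y'‖⁻¹ : ℝ) : ℂ) • y' with he2
      have he2n : ‖e2‖ = 1 := by
        rw [he2, norm_smul, Complex.norm_real, Real.norm_eq_abs, abs_inv, abs_norm]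
        exact inv_mul_cancel₀ hy'0
      have h12 : (inner ℂ x e2 : ℂ) = 0 := by
        rw [he2, inner_smul_right, hy', inner_sub_right, inner_smul_right, hxx]
        ring
      set c1 : ℂ := (inner ℂ x y : ℂ) with hc1
      set c2 : ℂ := ((‖y'‖ : ℝ) : ℂ) with hc2
      have hyd : y = c1 • x + c2 • e2 := by
        rw [he2, smul_smul]
        have hcc : c2 * ((‖y'‖⁻¹ : ℝ) : ℂ) = 1 := by
          rw [hc2]
          norm_cast
          exact mul_inv_cancel₀ hy'0
        rw [hcc, one_smul, hy']
        abel
      have hsum : Complex.normSq c1 + Complex.normSq c2 = 1 := by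
        have h21 : (inner ℂ e2 x : ℂ) = 0 := by rw [← inner_conj_symm, h12, map_zero]
        have he2' : (inner ℂ e2 e2 : ℂ) = 1 := by
          rw [inner_self_eq_norm_sq_to_K, he2n]; norm_num
        have exp : (inner ℂ (c1 • x + c2 • e2) (c1 • x + c2 • e2) : ℂ) =
            starRingEnd ℂ c1 * c1 * (inner ℂ x x : ℂ)
              + starRingEnd ℂ c1 * c2 * (inner ℂ x e2 : ℂ)
              + starRingEnd ℂ c2 * c1 * (inner ℂ e2 x : ℂ)
              + starRingEnd ℂ c2 * c2 * (inner ℂ e2 e2 : ℂ) := by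
          simp only [inner_add_left, inner_add_right, inner_smul_left, inner_smul_right]
          ring
        have hyy : (inner ℂ y y : ℂ) = 1 := by
          rw [inner_self_eq_norm_sq_to_K, hy1]; norm_num
        rw [hyd] at hyy
        rw [exp, hxx, he2', h12, h21] at hyy
        have ha' : starRingEnd ℂ c1 * c1 = (Complex.normSq c1 : ℂ) := by
          rw [mul_comm]; exact Complex.mul_conj c1
        have hb' : starRingEnd ℂ c2 * c2 = (Complex.normSq c2 : ℂ) := by
          rw [mul_comm]; exact Complex.mul_conj c2
        rw [mul_zero, mul_zero, mul_one, mul_one, add_zero, add_zero, ha', hb'] at hyy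
        exact_mod_cast hyy
      -- abbreviations for matrix entries of the two forms
      set q11 : ℂ := (inner ℂ x (T x) : ℂ) with hq11
      set q12 : ℂ := (inner ℂ x (T e2) : ℂ) with hq12
      set q21 : ℂ := (inner ℂ e2 (T x) : ℂ) with hq21
      set q22 : ℂ := (inner ℂ e2 (T e2) : ℂ) with hq22
      set p11 : ℂ := (inner ℂ (T x) (T x) : ℂ) with hp11
      set p12 : ℂ := (inner ℂ (T x) (T e2) : ℂ) with hp12
      set p21 : ℂ := (inner ℂ (T e2) (T x) : ℂ) with hp21
      set p22 : ℂ := (inner ℂ (T e2) (T e2) : ℂ) with hp22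
      set d0 : ℝ := ((p11 + p22) / 2).re with hd0
      set d1 : ℝ := (((p12 + p21) / 2)).re with hd1
      set d2 : ℝ := ((Complex.I * (p12 - p21) / 2)).re with hd2
      set d3 : ℝ := (((p11 - p22) / 2)).re with hd3
      -- Bloch coordinates of y
      set by1 : ℝ := 2 * (starRingEnd ℂ c1 * c2).re with hby1
      set by2 : ℝ := 2 * (starRingEnd ℂ c1 * c2).im with hby2
      set by3 : ℝ := Complex.normSq c1 - Complex.normSq c2 with hby3
      clear_value q11 q12 q21 q22 p11 p12 p21 p22 d0 d1 d2 d3 by1 by2 by3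
      have hbysph : by1 ^ 2 + by2 ^ 2 + by3 ^ 2 = 1 := by
        have hns : (starRingEnd ℂ c1 * c2).re * (starRingEnd ℂ c1 * c2).re
            + (starRingEnd ℂ c1 * c2).im * (starRingEnd ℂ c1 * c2).im
            = Complex.normSq c1 * Complex.normSq c2 := by
          rw [← Complex.normSq_apply, Complex.normSq_mul, Complex.normSq_conj]
        rw [hby1, hby2, hby3]
        linear_combination 4 * hns + (Complex.normSq c1 + Complex.normSq c2 + 1) * hsum
      -- values at x and y
      have hxq : u = (q11 + q22) / 2 + (q11 - q22) / 2 := by rw [hux]; ring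
      have hxp : ‖T x‖ ^ 2 = d0 + d3 := by
        rw [WShellAux.normSq_eq_re_inner (T x), ← hp11]
        have : p11 = (p11 + p22) / 2 + (p11 - p22) / 2 := by ring
        rw [this, Complex.add_re, ← hd0, ← hd3]
      have hyq : v = (q11 + q22) / 2 + ((by1 : ℝ) : ℂ) * ((q12 + q21) / 2)
          + ((by2 : ℝ) : ℂ) * (Complex.I * (q12 - q21) / 2)
          + ((by3 : ℝ) : ℂ) * ((q11 - q22) / 2) := by
        rw [hvy, hyd, WShellAux.comboQ T x e2 c1 c2 hsum, ← hq11, ← hq12, ← hq21, ← hq22,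
          ← hby1, ← hby2, ← hby3]
      have hyp : ‖T y‖ ^ 2 = d0 + by1 * d1 + by2 * d2 + by3 * d3 := by
        rw [hyd, WShellAux.comboP T x e2 c1 c2 hsum, ← hp11, ← hp12, ← hp21, ← hp22,
          ← hby1, ← hby2, ← hby3, ← hd0, ← hd1, ← hd2, ← hd3]
      -- the convex-combination point inside the Bloch ball
      set m1 : ℝ := b * by1 with hm1
      set m2 : ℝ := b * by2 with hm2
      set m3 : ℝ := a + b * by3 with hm3
      clear_value m1 m2 m3
      have hmball : m1 ^ 2 + m2 ^ 2 + m3 ^ 2 ≤ 1 := by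
        rw [hm1, hm2, hm3]
        exact WShellAux.ball_combo a b by1 by2 by3 ha hb hab hbysph
      obtain ⟨n1, n2, n3, hnsph, hQeq, hPge⟩ :=
        WShellAux.core3 ((q12 + q21) / 2) (Complex.I * (q12 - q21) / 2) ((q11 - q22) / 2)
          d1 d2 d3 m1 m2 m3 hmball
      obtain ⟨α, β, hαβ, hB1, hB2, hB3⟩ := WShellAux.blochSurj n1 n2 n3 hnsph
      refine ⟨α • x + β • e2, WShellAux.comboNorm x e2 hx1 he2n h12 α β hαβ, ?_, ?_⟩
      · -- norm constraint
        rw [← hT]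
        have hzp : ‖T (α • x + β • e2)‖ ^ 2 = d0 + n1 * d1 + n2 * d2 + n3 * d3 := by
          rw [WShellAux.comboP T x e2 α β hαβ, hB1, hB2, hB3, ← hp11, ← hp12, ← hp21, ← hp22,
            ← hd0, ← hd1, ← hd2, ← hd3]
        have hcomb : a * ‖T x‖ ^ 2 + b * ‖T y‖ ^ 2 ≤ ‖T (α • x + β • e2)‖ ^ 2 := by
          rw [hxp, hyp, hzp]
          have hiden : a * (d0 + d3) + b * (d0 + by1 * d1 + by2 * d2 + by3 * d3)
              = d0 + m1 * d1 + m2 * d2 + m3 * d3 := by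
            rw [hm1, hm2, hm3]
            linear_combination d0 * hab
          rw [hiden]
          linarith only [hPge]
        exact WShellAux.norm_lower r ‖T x‖ ‖T y‖ ‖T (α • x + β • e2)‖ a b ha hb hab hxr hyr
          (norm_nonneg _) hcomb
      · -- value equality
        rw [← hT]
        have hzq : (inner ℂ (α • x + β • e2) (T (α • x + β • e2)) : ℂ)
            = (q11 + q22) / 2 + ((n1 : ℝ) : ℂ) * ((q12 + q21) / 2)
              + ((n2 : ℝ) : ℂ) * (Complex.I * (q12 - q21) / 2)
              + ((n3 : ℝ) : ℂ) * ((q11 - q22) / 2) := by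
          rw [WShellAux.comboQ T x e2 α β hαβ, hB1, hB2, hB3, ← hq11, ← hq12, ← hq21, ← hq22]
        rw [Complex.real_smul, Complex.real_smul, hxq, hyq, hzq]
        rw [hm1, hm2, hm3] at hQeq
        push_cast at hQeq ⊢
        linear_combination ((q11 + q22) / 2) * habC - hQeq
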